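/- Let N = 2. The Hessian matrix of V at the point (θ₁, θ₂) = (0, π/3) equals [[3/2, −3/2],[−3/2, 3/2]]; its eigenvalues are 3 and 0. In particular (0, π/3) is a nondegenerate local minimum of V in the sense that the Hessian is positive semidefinite with one-dimensional kernel spanned by (1,1). -/

import Mathlib

open Real Finset Matrix

noncomputable def vortexPotential (N : ℕ) (θ : Fin N → ℝ) : ℝ :=
  - ∑ i : Fin N, ∑ j : Fin N,
      if i < j then
        Real.cos (θ i - θ j) + (1 / 2) * Real.log (2 - 2 * Real.cos (θ i - θ j))
      else 0

noncomputable def vortexHessian (N : ℕ) (θ : Fin N → ℝ) : Matrix (Fin N) (Fin N) ℝ :=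
  fun i j => iteratedFDeriv ℝ 2 (vortexPotential N) θ ![Pi.single i 1, Pi.single j 1]

noncomputable def D2 : (Fin 2 → ℝ) →L[ℝ] ℝ :=
  (ContinuousLinearMap.proj (R := ℝ) (φ := fun _ : Fin 2 => ℝ) 0) -
  (ContinuousLinearMap.proj (R := ℝ) (φ := fun _ : Fin 2 => ℝ) 1)

lemma D2_apply (v : Fin 2 → ℝ) : D2 v = v 0 - v 1 := rfl

noncomputable def vg (u : ℝ) : ℝ := -(Real.cos u + (1/2) * Real.log (2 - 2 * Real.cos u))
noncomputable def vg1 (u : ℝ) : ℝ := Real.sin u - Real.sin u / (2 - 2 * Real.cos u)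
noncomputable def vg2 (u : ℝ) : ℝ := Real.cos u + 1 / (2 - 2 * Real.cos u)

lemma two_sub_ne {u : ℝ} (h : Real.cos u ≠ 1) : 2 - 2 * Real.cos u ≠ 0 := by
  intro hh; apply h; linarith

lemma hasDerivAt_inner (u : ℝ) :
    HasDerivAt (fun u => 2 - 2 * Real.cos u) (2 * Real.sin u) u := by
  have hc := (Real.hasDerivAt_cos u).const_mul 2
  have := hc.const_sub 2
  exact this.congr_deriv (by ring)

lemma hasDerivAt_vg {u : ℝ} (h : Real.cos u ≠ 1) : HasDerivAt vg (vg1 u) u := by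
  have h2 := two_sub_ne h
  have hlog := (hasDerivAt_inner u).log h2
  have := ((Real.hasDerivAt_cos u).add (hlog.const_mul (1/2))).neg
  refine this.congr_deriv (Eq.symm ?_)
  unfold vg1
  field_simp
  ring

lemma hasDerivAt_vg1 {u : ℝ} (h : Real.cos u ≠ 1) : HasDerivAt vg1 (vg2 u) u := by
  have h2 := two_sub_ne h
  have hdiv := (Real.hasDerivAt_sin u).div (hasDerivAt_inner u) h2
  have := (Real.hasDerivAt_sin u).sub hdiv
  refine this.congr_deriv (Eq.symm ?_)
  unfold vg2
  have hs : Real.sin u ^ 2 = 1 - Real.cos u ^ 2 := by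
    have := Real.sin_sq_add_cos_sq u; linarith
  field_simp
  ring_nf
  nlinarith [hs, sq_nonneg (2 - 2*Real.cos u)]

lemma vortexPotential_eq (θ : Fin 2 → ℝ) : vortexPotential 2 θ = vg (D2 θ) := by
  rw [vortexPotential, Fin.sum_univ_two, Fin.sum_univ_two, D2_apply]
  norm_num [vg]

lemma hasFDerivAt_V {y : Fin 2 → ℝ} (h : Real.cos (D2 y) ≠ 1) :
    HasFDerivAt (vortexPotential 2) (vg1 (D2 y) • (D2 : (Fin 2 → ℝ) →L[ℝ] ℝ)) y := by
  have := (hasDerivAt_vg h).comp_hasFDerivAt y D2.hasFDerivAt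
  exact this.congr_of_eventuallyEq (Filter.Eventually.of_forall fun z => (vortexPotential_eq z))

example : True := trivial

lemma hθ3 : Real.cos (D2 ![0, Real.pi/3]) ≠ 1 := by
  have : D2 ![0, Real.pi/3] = -(Real.pi/3) := by rw [D2_apply]; norm_num
  rw [this, Real.cos_neg, Real.cos_pi_div_three]
  norm_num

lemma fderiv_fderiv_V :
    fderiv ℝ (fderiv ℝ (vortexPotential 2)) ![0, Real.pi/3] =
      ((vg2 (D2 ![0, Real.pi/3]) • D2).smulRight D2) := by
  have hUopen : IsOpen {y : Fin 2 → ℝ | Real.cos (D2 y) ≠ 1} :=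
    isOpen_ne.preimage (Real.continuous_cos.comp D2.continuous)
  have hmem : {y : Fin 2 → ℝ | Real.cos (D2 y) ≠ 1} ∈ nhds ![0, Real.pi/3] :=
    hUopen.mem_nhds hθ3
  have hEv : (fderiv ℝ (vortexPotential 2)) =ᶠ[nhds ![0, Real.pi/3]]
      (fun y => vg1 (D2 y) • (D2 : (Fin 2 → ℝ) →L[ℝ] ℝ)) := by
    filter_upwards [hmem] with y hy
    exact (hasFDerivAt_V hy).fderiv
  have hc : HasFDerivAt (fun y => vg1 (D2 y))
      (vg2 (D2 ![0, Real.pi/3]) • (D2 : (Fin 2 → ℝ) →L[ℝ] ℝ)) ![0, Real.pi/3] :=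
    (hasDerivAt_vg1 hθ3).comp_hasFDerivAt _ D2.hasFDerivAt
  have hF : HasFDerivAt (fun y => vg1 (D2 y) • (D2 : (Fin 2 → ℝ) →L[ℝ] ℝ))
      ((vg2 (D2 ![0, Real.pi/3]) • D2).smulRight D2) ![0, Real.pi/3] := by
    have := hc.smul (hasFDerivAt_const (D2 : (Fin 2 → ℝ) →L[ℝ] ℝ) ![0, Real.pi/3])
    rw [smul_zero, zero_add] at this
    exact this
  exact (hF.congr_of_eventuallyEq hEv).fderiv

lemma vg2_val : vg2 (D2 ![0, Real.pi/3]) = 3/2 := by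
  have : D2 ![0, Real.pi/3] = -(Real.pi/3) := by rw [D2_apply]; norm_num
  rw [this, vg2, Real.cos_neg, Real.cos_pi_div_three]
  norm_num

lemma hess_entry (i j : Fin 2) :
    vortexHessian 2 ![0, Real.pi/3] i j =
      (3/2) * (D2 (Pi.single i 1)) * (D2 (Pi.single j 1)) := by
  rw [vortexHessian, iteratedFDeriv_two_apply, fderiv_fderiv_V]
  simp only [ContinuousLinearMap.smulRight_apply, ContinuousLinearMap.smul_apply,
    smul_eq_mul, vg2_val, Matrix.cons_val_zero, Matrix.cons_val_one, Matrix.head_cons]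

lemma D2_single0 : D2 (Pi.single (0 : Fin 2) 1) = 1 := by
  rw [D2_apply]; simp
lemma D2_single1 : D2 (Pi.single (1 : Fin 2) 1) = -1 := by
  rw [D2_apply]; simp

lemma hess_eq : vortexHessian 2 ![0, Real.pi/3] = !![3/2, -3/2; -3/2, 3/2] := by
  ext i j
  fin_cases i <;> fin_cases j <;>
    simp [hess_entry, D2_single0, D2_single1] <;> norm_num

/-- For `N = 2`, the Hessian of `V` at `(0, π/3)` equals
`[[3/2, -3/2],[-3/2, 3/2]]`, its eigenvalues are `3` and `0`, and it is positive
semidefinite with one-dimensional kernel spanned by `(1,1)`; i.e. `(0, π/3)` is a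
nondegenerate local minimum of `V`. -/
theorem two_vortex_triangle_hessian :
    vortexHessian 2 ![0, π / 3] = !![3/2, -3/2; -3/2, 3/2] ∧
    (∀ μ : ℝ, (∃ v : Fin 2 → ℝ, v ≠ 0 ∧
        (vortexHessian 2 ![0, π / 3]).mulVec v = μ • v) ↔ (μ = 3 ∨ μ = 0)) ∧
    (vortexHessian 2 ![0, π / 3]).PosSemidef ∧
    (∀ v : Fin 2 → ℝ, (vortexHessian 2 ![0, π / 3]).mulVec v = 0 ↔
      ∃ c : ℝ, v = c • ![1, 1]) := by
  rw [hess_eq]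
  refine ⟨rfl, ?_, ?_, ?_⟩
  · intro μ
    constructor
    · rintro ⟨v, hv0, hv⟩
      have h0 := congrFun hv 0
      have h1 := congrFun hv 1
      simp [Matrix.mulVec, dotProduct, Fin.sum_univ_two] at h0 h1
      by_cases h : v 0 = v 1
      · right
        have hne : v 0 ≠ 0 := by
          intro hz
          apply hv0
          funext i; fin_cases i <;> simp_all
        have : μ * v 0 = 0 := by nlinarith
        rcases mul_eq_zero.mp this with h' | h'
        · exact h'
        · exact absurd h' hne
      · left
        have : (μ - 3) * (v 0 - v 1) = 0 := by nlinarith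
        rcases mul_eq_zero.mp this with h' | h'
        · linarith
        · exact absurd (by linarith : v 0 = v 1) h
    · rintro (rfl | rfl)
      · exact ⟨![1, -1], by simp [funext_iff, Fin.forall_fin_two], by
          funext i; fin_cases i <;> simp [Matrix.mulVec, dotProduct, Fin.sum_univ_two] <;> norm_num⟩
      · exact ⟨![1, 1], by simp [funext_iff, Fin.forall_fin_two], by
          funext i; fin_cases i <;> simp [Matrix.mulVec, dotProduct, Fin.sum_univ_two] <;> norm_num⟩
  · rw [posSemidef_iff_dotProduct_mulVec]
    constructor
    · show (!![3/2, -3/2; -3/2, 3/2] : Matrix (Fin 2) (Fin 2) ℝ)ᴴ = _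
      ext i j
      fin_cases i <;> fin_cases j <;> simp
    · intro x
      have : (star x) ⬝ᵥ (!![3/2, -3/2; -3/2, 3/2] : Matrix (Fin 2) (Fin 2) ℝ).mulVec x
          = (3/2) * (x 0 - x 1)^2 := by
        simp [Matrix.mulVec, dotProduct, Fin.sum_univ_two]
        ring
      rw [this]
      positivity
  · intro v
    constructor
    · intro hv
      have h0 := congrFun hv 0
      simp [Matrix.mulVec, dotProduct, Fin.sum_univ_two] at h0
      refine ⟨v 0, ?_⟩
      funext i; fin_cases i <;> simp <;> linarith
    · rintro ⟨c, rfl⟩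
      funext i; fin_cases i <;> simp [Matrix.mulVec, dotProduct, Fin.sum_univ_two] <;> ring
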